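/- Let the weights μ_1, ..., μ_n ≥ 0 be pairwise distinct and monotone in the degrees d, and let X be an optimal symmetric solution of ROCP. If x_{ik} > 0 for some internal index i ∈ {1, ..., q} and some position k ≤ ⌈q/2⌉, then x_{jl} = 0 for all j = 1, ..., i and all l = k+1, ..., ⌈q/2⌉. -/

import Mathlib

open Matrix Finset

/-- The ROCP objective `f(X) = (1/2) ∑_{i,j} ∑_{k,l} μ_i x_{ik} μ_j x_{jl} |k - l|`. -/
noncomputable def fROCP {n q : ℕ} (μ : Fin n → ℝ) (X : Matrix (Fin n) (Fin q) ℝ) : ℝ :=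
  (1 / 2) * ∑ i, ∑ j, ∑ k, ∑ l,
    μ i * X i k * (μ j * X j l) * |((k : ℕ) : ℝ) - ((l : ℕ) : ℝ)|

/-- The feasible set of the relaxed optimal caterpillar problem (ROCP): box constraints,
unique assignment of each vertex, one internal vertex per backbone position, and balance
of vertex degrees (positions `k = 1, ..., q` are represented by `Fin q`, vertex indices
`i = 1, ..., n` by `Fin n`, internal indices being those with `(i : ℕ) < q`). -/
def ROCPFeasible (n q : ℕ) (d : Fin n → ℕ) (X : Matrix (Fin n) (Fin q) ℝ) : Prop :=
  (∀ i k, 0 ≤ X i k ∧ X i k ≤ 1) ∧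
  (∀ i, ∑ k, X i k = 1) ∧
  (∀ k, (∑ i : Fin n, if (i : ℕ) < q then X i k else 0) = 1) ∧
  (∀ k : Fin q, (k : ℕ) ≠ 0 → (k : ℕ) ≠ q - 1 → ∑ i, ((d i : ℝ) - 2) * X i k = 0) ∧
  (∀ k : Fin q, ((k : ℕ) = 0 ∨ (k : ℕ) = q - 1) → ∑ i, ((d i : ℝ) - 2) * X i k = -1)

/-- A matrix is a symmetric solution if `x_{ik} = x_{i, q-k+1}` for all `i`, `k`. -/
def SymmetricSol {n q : ℕ} (X : Matrix (Fin n) (Fin q) ℝ) : Prop :=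
  ∀ i k, X i k = X i k.rev


lemma card_val_lt {n : ℕ} (t : ℕ) (ht : t ≤ n) :
    (Finset.univ.filter (fun m : Fin n => (m : ℕ) < t)).card = t := by
  have h : Finset.univ.filter (fun m : Fin n => (m : ℕ) < t)
      = Finset.map (Fin.castLEEmb ht) Finset.univ := by
    ext m
    simp only [Finset.mem_filter, Finset.mem_univ, true_and, Finset.mem_map]
    constructor
    · intro hm; exact ⟨⟨m, hm⟩, by simp [Fin.castLEEmb, Fin.ext_iff]⟩
    · rintro ⟨x, rfl⟩; simp [Fin.castLEEmb]
  rw [h, Finset.card_map, Finset.card_univ, Fintype.card_fin]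

lemma abs_pair_anti' {x y u v : ℝ} (hxy : x ≤ y) (hv : y ≤ v) :
    |y - u| + |y - v| ≤ |x - u| + |x - v| := by
  have h1 : |y - u| - |x - u| ≤ |y - x| := by
    have h := abs_sub_abs_le_abs_sub (y - u) (x - u)
    simpa [show y - u - (x - u) = y - x by ring] using h
  have h2 : |y - x| = y - x := abs_of_nonneg (by linarith)
  have h3 : |y - v| = v - y := by rw [abs_sub_comm]; exact abs_of_nonneg (by linarith)
  have h4 : |x - v| = v - x := by rw [abs_sub_comm]; exact abs_of_nonneg (by linarith)
  linarith

lemma abs_pair_anti {x y u v : ℝ} (hxy : x ≤ y) (h : y ≤ u ∨ y ≤ v) :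
    |y - u| + |y - v| ≤ |x - u| + |x - v| := by
  rcases h with h | h
  · have := abs_pair_anti' (u := v) (v := u) hxy h; linarith
  · exact abs_pair_anti' hxy h

lemma sum_e {q : ℕ} (A B : Fin q) (G : Fin q → ℝ) :
    ∑ p, ((if p = A then (1:ℝ) else 0) - (if p = B then 1 else 0)) * G p = G A - G B := by
  simp [sub_mul, Finset.sum_sub_distrib, ite_mul, Finset.sum_ite_eq']

lemma sum4_comm {α β : Type*} [Fintype α] [Fintype β] (F : α → α → β → β → ℝ) :
    ∑ i, ∑ j, ∑ k, ∑ l, F i j k l = ∑ k, ∑ l, ∑ i, ∑ j, F i j k l := by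
  calc ∑ i, ∑ j, ∑ k, ∑ l, F i j k l
      = ∑ i, ∑ k, ∑ j, ∑ l, F i j k l := Finset.sum_congr rfl (fun i _ => Finset.sum_comm)
    _ = ∑ k, ∑ i, ∑ j, ∑ l, F i j k l := Finset.sum_comm
    _ = ∑ k, ∑ i, ∑ l, ∑ j, F i j k l :=
        Finset.sum_congr rfl (fun k _ => Finset.sum_congr rfl (fun i _ => Finset.sum_comm))
    _ = ∑ k, ∑ l, ∑ i, ∑ j, F i j k l := Finset.sum_congr rfl (fun k _ => Finset.sum_comm)

lemma key_ineq {q : ℕ} (c : Fin q → ℝ) (hc0 : ∀ l, 0 ≤ c l) (hcs : ∀ l, c l = c l.rev)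
    (A B : Fin q) (hAB : (A : ℕ) < (B : ℕ)) (hB2 : 2 * (B : ℕ) < q) :
    (((B : ℕ) : ℝ) - ((A : ℕ) : ℝ)) * c B + ∑ l, c l * |((B : ℕ) : ℝ) - ((l : ℕ) : ℝ)|
      ≤ ∑ l, c l * |((A : ℕ) : ℝ) - ((l : ℕ) : ℝ)| := by
  have hrev : ∀ x : ℝ, ∑ l : Fin q, c l * |x - ((l : ℕ) : ℝ)|
      = ∑ l : Fin q, c l * |x - (((l.rev : Fin q) : ℕ) : ℝ)| := by
    intro x
    refine Fintype.sum_bijective Fin.rev Fin.rev_bijective _ _ (fun l => ?_)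
    rw [Fin.rev_rev, ← hcs]
  set ψ : Fin q → ℝ := fun l =>
    (|((A:ℕ):ℝ) - ((l:ℕ):ℝ)| + |((A:ℕ):ℝ) - (((l.rev : Fin q):ℕ):ℝ)|)
    - (|((B:ℕ):ℝ) - ((l:ℕ):ℝ)| + |((B:ℕ):ℝ) - (((l.rev : Fin q):ℕ):ℝ)|) with hψdef
  have hψ0 : ∀ l, 0 ≤ ψ l := by
    intro l
    have hvr : ((l.rev : Fin q) : ℕ) = q - 1 - (l : ℕ) := by rw [Fin.val_rev]; omega
    have hor : ((B:ℕ):ℝ) ≤ ((l:ℕ):ℝ) ∨ ((B:ℕ):ℝ) ≤ (((l.rev : Fin q):ℕ):ℝ) := by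
      have hl : (l : ℕ) < q := l.isLt
      have : (B:ℕ) ≤ (l:ℕ) ∨ (B:ℕ) ≤ ((l.rev : Fin q):ℕ) := by omega
      rcases this with h | h
      · exact Or.inl (by exact_mod_cast h)
      · exact Or.inr (by exact_mod_cast h)
    have h := abs_pair_anti (x := ((A:ℕ):ℝ)) (y := ((B:ℕ):ℝ))
      (by exact_mod_cast hAB.le) hor
    simp only [hψdef]; linarith
  have hψB : 2 * (((B:ℕ):ℝ) - ((A:ℕ):ℝ)) ≤ ψ B := by
    have hvr : ((B.rev : Fin q) : ℕ) = q - 1 - (B : ℕ) := by rw [Fin.val_rev]; omega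
    have h1 : ((A:ℕ):ℝ) ≤ ((B:ℕ):ℝ) := by exact_mod_cast hAB.le
    have h2 : ((B:ℕ):ℝ) ≤ (((B.rev : Fin q):ℕ):ℝ) := by
      have : (B:ℕ) ≤ ((B.rev : Fin q):ℕ) := by omega
      exact_mod_cast this
    have e1 : |((A:ℕ):ℝ) - ((B:ℕ):ℝ)| = ((B:ℕ):ℝ) - ((A:ℕ):ℝ) := by
      rw [abs_sub_comm]; exact abs_of_nonneg (by linarith)
    have e2 : |((A:ℕ):ℝ) - (((B.rev : Fin q):ℕ):ℝ)| = (((B.rev : Fin q):ℕ):ℝ) - ((A:ℕ):ℝ) := by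
      rw [abs_sub_comm]; exact abs_of_nonneg (by linarith)
    have e3 : |((B:ℕ):ℝ) - ((B:ℕ):ℝ)| = 0 := by simp
    have e4 : |((B:ℕ):ℝ) - (((B.rev : Fin q):ℕ):ℝ)| = (((B.rev : Fin q):ℕ):ℝ) - ((B:ℕ):ℝ) := by
      rw [abs_sub_comm]; exact abs_of_nonneg (by linarith)
    simp only [hψdef]; rw [e1, e2, e3, e4]; ring_nf; linarith
  have hsingle : c B * ψ B ≤ ∑ l, c l * ψ l :=
    Finset.single_le_sum (f := fun l => c l * ψ l)
      (fun l _ => mul_nonneg (hc0 l) (hψ0 l)) (Finset.mem_univ B)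
  have hsplit : ∑ l, c l * ψ l
      = 2 * (∑ l, c l * |((A:ℕ):ℝ) - ((l:ℕ):ℝ)|) - 2 * (∑ l, c l * |((B:ℕ):ℝ) - ((l:ℕ):ℝ)|) := by
    have : ∀ l : Fin q, c l * ψ l
        = (c l * |((A:ℕ):ℝ) - ((l:ℕ):ℝ)| + c l * |((A:ℕ):ℝ) - (((l.rev:Fin q):ℕ):ℝ)|)
          - (c l * |((B:ℕ):ℝ) - ((l:ℕ):ℝ)| + c l * |((B:ℕ):ℝ) - (((l.rev:Fin q):ℕ):ℝ)|) := by
      intro l; simp only [hψdef]; ring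
    rw [Finset.sum_congr rfl (fun l _ => this l), Finset.sum_sub_distrib,
      Finset.sum_add_distrib, Finset.sum_add_distrib, ← hrev, ← hrev]
    ring
  have hmul : c B * (2 * (((B:ℕ):ℝ) - ((A:ℕ):ℝ))) ≤ c B * ψ B :=
    mul_le_mul_of_nonneg_left hψB (hc0 B)
  linarith

lemma fROCP_eq {n q : ℕ} (μ : Fin n → ℝ) (X : Matrix (Fin n) (Fin q) ℝ) :
    fROCP μ X = (1/2) * ∑ k : Fin q, ∑ l : Fin q,
      (∑ m, μ m * X m k) * (∑ m, μ m * X m l) * |((k:ℕ):ℝ) - ((l:ℕ):ℝ)| := by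
  unfold fROCP
  congr 1
  rw [sum4_comm (fun i j k l => μ i * X i k * (μ j * X j l) * |((k:ℕ):ℝ) - ((l:ℕ):ℝ)|)]
  refine Finset.sum_congr rfl (fun k _ => Finset.sum_congr rfl (fun l _ => ?_))
  rw [Finset.sum_mul_sum, Finset.sum_mul]
  refine Finset.sum_congr rfl (fun i _ => ?_)
  rw [Finset.sum_mul]

set_option maxHeartbeats 1600000 in
lemma lemA {n q : ℕ} (hq : 4 ≤ q) (hnq : q ≤ n)
    (d : Fin n → ℕ) (μ : Fin n → ℝ)
    (hμ : ∀ i, 0 ≤ μ i) (hμ_inj : Function.Injective μ)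
    (hμ_mono : ∀ i j : Fin n, 2 ≤ d i → 2 ≤ d j → i < j → μ j ≤ μ i)
    (hd_anti : ∀ i j : Fin n, i ≤ j → d j ≤ d i)
    (hd_sum : ∑ i, d i = 2 * (n - 1))
    (hd_int : ∀ i : Fin n, (i : ℕ) < q → 1 < d i)
    (hd_pend : ∀ i : Fin n, q ≤ (i : ℕ) → d i = 1)
    (X : Matrix (Fin n) (Fin q) ℝ)
    (hfeas : ROCPFeasible n q d X)
    (hopt : ∀ Y, ROCPFeasible n q d Y → fROCP μ Y ≤ fROCP μ X)
    (hsym : SymmetricSol X)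
    (i j : Fin n) (hi : (i : ℕ) < q) (hji : j < i)
    (A B : Fin q) (hAB : (A : ℕ) < (B : ℕ)) (hB2 : 2 * (B : ℕ) < q)
    (hXiA : 0 < X i A) (hXjB : 0 < X j B) : False := by
  obtain ⟨hbox, hrow, hcol, hdegI, hdegE⟩ := hfeas
  have hq1 : 1 ≤ q := by omega
  have hjq : (j : ℕ) < q := lt_trans hji hi
  have hdj2 : 2 ≤ d j := hd_int j hjq
  have hdi2 : 2 ≤ d i := hd_int i hi
  have hdij : d i ≤ d j := hd_anti j i (le_of_lt hji)
  have hμij : μ i < μ j := by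
    have hle : μ i ≤ μ j := hμ_mono j i hdj2 hdi2 hji
    rcases lt_or_eq_of_le hle with h | h
    · exact h
    · exact absurd (hμ_inj h.symm) (ne_of_lt hji)
  have hμj0 : 0 < μ j := lt_of_le_of_lt (hμ i) hμij
  -- n ≥ q + 2
  have hn2 : q + 2 ≤ n := by
    have hsumge : n + q ≤ ∑ m : Fin n, d m := by
      have h1 : ∀ m : Fin n, (if (m : ℕ) < q then 2 else 1) ≤ d m := by
        intro m
        by_cases h : (m : ℕ) < q
        · rw [if_pos h]; exact hd_int m h
        · simp [h, (hd_pend m (le_of_not_gt h)).ge]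
      have h2 : (∑ m : Fin n, if (m : ℕ) < q then 2 else 1) ≤ ∑ m : Fin n, d m :=
        Finset.sum_le_sum (fun m _ => h1 m)
      have h3 : (∑ m : Fin n, if (m : ℕ) < q then 2 else 1)
          = (Finset.univ.filter (fun m : Fin n => (m : ℕ) < q)).card * 2
            + (Finset.univ.filter (fun m : Fin n => ¬ (m : ℕ) < q)).card * 1 := by
        rw [Finset.sum_ite, Finset.sum_const, Finset.sum_const]; simp [mul_comm]
      have h4 : (Finset.univ.filter (fun m : Fin n => (m : ℕ) < q)).card = q :=
        card_val_lt q hnq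
      have h5 : (Finset.univ.filter (fun m : Fin n => (m : ℕ) < q)).card
          + (Finset.univ.filter (fun m : Fin n => ¬ (m : ℕ) < q)).card = n := by
        rw [Finset.card_filter_add_card_filter_not, Finset.card_univ, Fintype.card_fin]
      omega
    rw [hd_sum] at hsumge
    omega
  -- position values
  have hAq : (A : ℕ) < q := A.isLt
  have hBq : (B : ℕ) < q := B.isLt
  have hvrA : ((A.rev : Fin q) : ℕ) = q - 1 - (A : ℕ) := by rw [Fin.val_rev]; omega
  have hvrB : ((B.rev : Fin q) : ℕ) = q - 1 - (B : ℕ) := by rw [Fin.val_rev]; omega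
  have hAne : A ≠ B := by intro h; rw [h] at hAB; omega
  have hArev_ne : A ≠ A.rev := by
    intro h; have := congrArg Fin.val h; rw [hvrA] at this; omega
  have hArevB : A.rev ≠ B := by
    intro h; have := congrArg Fin.val h; rw [hvrA] at this; omega
  have hABrev : A ≠ B.rev := by
    intro h; have := congrArg Fin.val h; rw [hvrB] at this; omega
  -- sum-based entry bounds
  have hhalf : ∀ (r : Fin n) (P : Fin q), P ≠ P.rev → X r P ≤ 1/2 := by
    intro r P hP
    have hsub : ({P, P.rev} : Finset (Fin q)) ⊆ Finset.univ := Finset.subset_univ _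
    have hle : ∑ p ∈ ({P, P.rev} : Finset (Fin q)), X r p ≤ ∑ p, X r p :=
      Finset.sum_le_sum_of_subset_of_nonneg hsub (fun p _ _ => (hbox r p).1)
    rw [hrow r, Finset.sum_pair hP] at hle
    have := hsym r P
    linarith
  have hXjA : X j A ≤ 1/2 := hhalf j A hArev_ne
  have hXiB1 : X i B ≤ 1 - 2 * X i A := by
    have hsub : ({A, A.rev, B} : Finset (Fin q)) ⊆ Finset.univ := Finset.subset_univ _
    have hle : ∑ p ∈ ({A, A.rev, B} : Finset (Fin q)), X i p ≤ ∑ p, X i p :=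
      Finset.sum_le_sum_of_subset_of_nonneg hsub (fun p _ _ => (hbox i p).1)
    rw [hrow i] at hle
    rw [Finset.sum_insert (by simp [hArev_ne, hAne]),
      Finset.sum_insert (by simp [hArevB]), Finset.sum_singleton] at hle
    have := hsym i A
    linarith
  -- pendant choice
  have hB0 : (B : ℕ) ≠ 0 := by omega
  have hBq1 : (B : ℕ) ≠ q - 1 := by omega
  have hdegB := hdegI B hB0 hBq1
  have hpend : ∃ p : Fin n, q ≤ (p : ℕ) ∧ (d i < d j → 0 < X p B) := by
    by_cases hcase : d i < d j
    · -- pendant mass at column B is positive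
      have hsplit : ∑ m : Fin n, ((d m : ℝ) - 2) * X m B
          = ∑ m ∈ Finset.univ.filter (fun m : Fin n => (m : ℕ) < q), ((d m : ℝ) - 2) * X m B
            + ∑ m ∈ Finset.univ.filter (fun m : Fin n => ¬ (m : ℕ) < q), ((d m : ℝ) - 2) * X m B :=
        (Finset.sum_filter_add_sum_filter_not _ _ _).symm
      have hpendval : ∑ m ∈ Finset.univ.filter (fun m : Fin n => ¬ (m : ℕ) < q),
          ((d m : ℝ) - 2) * X m B
          = - ∑ m ∈ Finset.univ.filter (fun m : Fin n => ¬ (m : ℕ) < q), X m B := by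
        rw [← Finset.sum_neg_distrib]
        refine Finset.sum_congr rfl (fun m hm => ?_)
        have hm' : q ≤ (m : ℕ) := le_of_not_gt (by simpa using (Finset.mem_filter.1 hm).2)
        rw [hd_pend m hm']; push_cast; ring
      have hintpos : 0 < ∑ m ∈ Finset.univ.filter (fun m : Fin n => (m : ℕ) < q),
          ((d m : ℝ) - 2) * X m B := by
        have hterm : 0 < ((d j : ℝ) - 2) * X j B := by
          have : (2:ℝ) < (d j : ℝ) := by exact_mod_cast lt_of_le_of_lt hdi2 hcase
          exact mul_pos (by linarith) hXjB
        refine lt_of_lt_of_le hterm ?_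
        refine Finset.single_le_sum (f := fun m => ((d m : ℝ) - 2) * X m B) ?_ ?_
        · intro m hm
          have hm' : (m : ℕ) < q := by simpa using (Finset.mem_filter.1 hm).2
          have : (2:ℝ) ≤ (d m : ℝ) := by exact_mod_cast hd_int m hm'
          exact mul_nonneg (by linarith) (hbox m B).1
        · simp [hjq]
      have hpendpos : 0 < ∑ m ∈ Finset.univ.filter (fun m : Fin n => ¬ (m : ℕ) < q), X m B := by
        rw [hdegB] at hsplit
        rw [hpendval] at hsplit
        linarith
      have : ∃ m ∈ Finset.univ.filter (fun m : Fin n => ¬ (m : ℕ) < q), 0 < X m B := by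
        by_contra hcon
        push_neg at hcon
        have : ∑ m ∈ Finset.univ.filter (fun m : Fin n => ¬ (m : ℕ) < q), X m B ≤ 0 :=
          Finset.sum_nonpos (fun m hm => hcon m (by simpa using hm))
        linarith
      obtain ⟨p, hp, hp2⟩ := this
      exact ⟨p, le_of_not_gt (by simpa using (Finset.mem_filter.1 hp).2), fun _ => hp2⟩
    · exact ⟨⟨q, by omega⟩, by simp, fun h => absurd h hcase⟩
  obtain ⟨p₀, hp₀q, hp₀B⟩ := hpend
  have hp₀i : p₀ ≠ i := by intro h; rw [h] at hp₀q; omega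
  have hp₀j : p₀ ≠ j := by intro h; rw [h] at hp₀q; omega
  have hdp₀ : d p₀ = 1 := hd_pend p₀ hp₀q
  have hXp₀A : X p₀ A ≤ 1/2 := hhalf p₀ A hArev_ne
  -- epsilon and delta
  set ν : ℝ := μ j - μ i with hνdef
  have hν : 0 < ν := by simp only [hνdef]; linarith
  set Dr : ℝ := ((d j - d i : ℕ) : ℝ) with hDrdef
  have hDr0 : 0 ≤ Dr := by positivity
  have hDrval : Dr = (d j : ℝ) - (d i : ℝ) := by
    rw [hDrdef, Nat.cast_sub hdij]
  have hDrpos : d i < d j → 0 < Dr := by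
    intro h
    rw [hDrdef]
    have h2 : 0 < d j - d i := by omega
    exact_mod_cast h2
  set cB : ℝ := ∑ m, μ m * X m B with hcBdef
  have hcB : 0 < cB := by
    have h1 : μ j * X j B ≤ cB := by
      refine Finset.single_le_sum (f := fun m => μ m * X m B) ?_ (Finset.mem_univ j)
      exact fun m _ => mul_nonneg (hμ m) (hbox m B).1
    have h2 := mul_pos hμj0 hXjB
    linarith
  set K : ℝ := ν + Dr * μ p₀ with hKdef
  have hK : 0 < K := by
    have h1 : 0 ≤ Dr * μ p₀ := mul_nonneg hDr0 (hμ p₀)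
    simp only [hKdef]; linarith
  set εb : ℝ := if d i < d j then X p₀ B / Dr else 1 with hεbdef
  have hεb : 0 < εb := by
    rw [hεbdef]
    split_ifs with h
    · exact div_pos (hp₀B h) (hDrpos h)
    · norm_num
  set ε : ℝ := min (min (X i A) (X j B)) (min (cB / (2*K)) (min (1/(2*(Dr+1))) εb)) with hεdef
  have hε : 0 < ε := by
    refine lt_min (lt_min hXiA hXjB) (lt_min (div_pos hcB (by linarith)) (lt_min ?_ hεb))
    have h1 : 0 < Dr + 1 := by linarith
    positivity
  have hεXiA : ε ≤ X i A := le_trans (min_le_left _ _) (min_le_left _ _)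
  have hεXjB : ε ≤ X j B := le_trans (min_le_left _ _) (min_le_right _ _)
  have hεcB : ε ≤ cB / (2*K) := le_trans (min_le_right _ _) (min_le_left _ _)
  have hεD : ε ≤ 1/(2*(Dr+1)) :=
    le_trans (min_le_right _ _) (le_trans (min_le_right _ _) (min_le_left _ _))
  have hεεb : ε ≤ εb :=
    le_trans (min_le_right _ _) (le_trans (min_le_right _ _) (min_le_right _ _))
  have hε12 : ε ≤ 1/2 := by
    refine le_trans hεD ?_
    rw [div_le_div_iff₀ (by linarith) (by norm_num)]
    linarith
  set δ : ℝ := Dr * ε with hδdef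
  have hδ0 : 0 ≤ δ := mul_nonneg hDr0 (le_of_lt hε)
  have hδB : δ ≤ X p₀ B := by
    by_cases h : d i < d j
    · have hDr : 0 < Dr := hDrpos h
      have h1 : ε ≤ X p₀ B / Dr := le_trans hεεb (by rw [hεbdef]; simp [h])
      calc δ = Dr * ε := hδdef
        _ ≤ Dr * (X p₀ B / Dr) := mul_le_mul_of_nonneg_left h1 (le_of_lt hDr)
        _ = X p₀ B := by field_simp
    · have hd0 : d j - d i = 0 := by omega
      have h2 : Dr = 0 := by rw [hDrdef, hd0]; norm_num
      rw [hδdef, h2, zero_mul]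
      exact (hbox p₀ B).1
  have hδ12 : δ ≤ 1/2 := by
    have h1 : δ ≤ Dr * (1/(2*(Dr+1))) := mul_le_mul_of_nonneg_left hεD hDr0
    have h2 : Dr * (1/(2*(Dr+1))) ≤ 1/2 := by
      rw [mul_one_div, div_le_div_iff₀ (by linarith) (by norm_num)]
      linarith
    linarith
  -- the perturbation
  set g : Fin n → ℝ := fun m =>
    (if m = j then ε else 0) - (if m = i then ε else 0) + (if m = p₀ then δ else 0) with hgdef
  set e : Fin q → ℝ := fun p =>
    (if p = A then (1:ℝ) else 0) - (if p = B then 1 else 0) with hedef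
  set Y : Matrix (Fin n) (Fin q) ℝ := fun m p => X m p + g m * e p with hYdef
  have hij : i ≠ j := (ne_of_lt hji).symm
  have hgj : g j = ε := by
    simp only [hgdef]
    simp [ne_of_lt hji, Ne.symm hp₀j]
  have hgi : g i = -ε := by
    simp only [hgdef]
    simp [hij, Ne.symm hp₀i]
  have hgp : g p₀ = δ := by
    simp only [hgdef]
    simp [hp₀j, hp₀i]
  have hg0 : ∀ m, m ≠ j → m ≠ i → m ≠ p₀ → g m = 0 := by
    intro m h1 h2 h3
    simp only [hgdef]
    simp [h1, h2, h3]
  have heA : e A = 1 := by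
    simp only [hedef]
    simp [hAne]
  have heB : e B = -1 := by
    simp only [hedef]
    simp [Ne.symm hAne]
  have he0 : ∀ p, p ≠ A → p ≠ B → e p = 0 := by
    intro p h1 h2
    simp only [hedef]
    simp [h1, h2]
  have hYent : ∀ m p, Y m p = X m p + g m * e p := fun m p => rfl
  -- feasibility of Y : box constraints
  have hYbox : ∀ m p, 0 ≤ Y m p ∧ Y m p ≤ 1 := by
    intro m p
    rw [hYent m p]
    by_cases hmj : m = j
    · rw [hmj, hgj]
      by_cases hpA : p = A
      · rw [hpA, heA]
        constructor
        · have h1 := (hbox j A).1; linarith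
        · linarith [hXjA]
      · by_cases hpB : p = B
        · rw [hpB, heB]
          constructor
          · linarith [hεXjB]
          · have h1 := (hbox j B).2; linarith
        · rw [he0 p hpA hpB, mul_zero, add_zero]; exact hbox j p
    · by_cases hmi : m = i
      · rw [hmi, hgi]
        by_cases hpA : p = A
        · rw [hpA, heA]
          constructor
          · linarith [hεXiA]
          · have h1 := (hbox i A).2; linarith
        · by_cases hpB : p = B
          · rw [hpB, heB]
            constructor
            · have h1 := (hbox i B).1; linarith
            · linarith [hXiB1, hεXiA]
          · rw [he0 p hpA hpB, mul_zero, add_zero]; exact hbox i p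
      · by_cases hmp : m = p₀
        · rw [hmp, hgp]
          by_cases hpA : p = A
          · rw [hpA, heA]
            constructor
            · have h1 := (hbox p₀ A).1; linarith
            · linarith [hXp₀A]
          · by_cases hpB : p = B
            · rw [hpB, heB]
              constructor
              · linarith [hδB]
              · have h1 := (hbox p₀ B).2; linarith
            · rw [he0 p hpA hpB, mul_zero, add_zero]; exact hbox p₀ p
        · rw [hg0 m hmj hmi hmp, zero_mul, add_zero]; exact hbox m p
  -- sums of e and g
  have hesum : ∑ p, e p = 0 := by
    simp only [hedef]
    rw [Finset.sum_sub_distrib, Finset.sum_ite_eq' Finset.univ A (fun _ => (1:ℝ)),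
      Finset.sum_ite_eq' Finset.univ B (fun _ => (1:ℝ))]
    simp
  have hsingle : ∀ (r : Fin n) (v : ℝ),
      (∑ m : Fin n, if (m : ℕ) < q then (if m = r then v else 0) else 0)
        = if (r : ℕ) < q then v else 0 := by
    intro r v
    have hpt : ∀ m : Fin n, (if (m : ℕ) < q then (if m = r then v else 0) else 0)
        = (if m = r then (if (r : ℕ) < q then v else 0) else 0) := by
      intro m
      by_cases h : m = r
      · simp [h]
      · simp [h]
    rw [Finset.sum_congr rfl (fun m _ => hpt m)]
    simp [Finset.sum_ite_eq']
  have hgsum_int : (∑ m : Fin n, if (m : ℕ) < q then g m else 0) = 0 := by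
    have hpt : ∀ m : Fin n, (if (m : ℕ) < q then g m else 0)
        = (if (m : ℕ) < q then (if m = j then ε else 0) else 0)
          - (if (m : ℕ) < q then (if m = i then ε else 0) else 0)
          + (if (m : ℕ) < q then (if m = p₀ then δ else 0) else 0) := by
      intro m
      by_cases h : (m : ℕ) < q
      · simp only [if_pos h, hgdef]
      · simp [h]
    rw [Finset.sum_congr rfl (fun m _ => hpt m), Finset.sum_add_distrib,
      Finset.sum_sub_distrib, hsingle j ε, hsingle i ε, hsingle p₀ δ]
    rw [if_pos hjq, if_pos hi, if_neg (not_lt.2 hp₀q)]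
    ring
  have hμg : (∑ m, μ m * g m) = K * ε := by
    simp only [hgdef, mul_sub, mul_add, mul_ite, mul_zero]
    rw [Finset.sum_add_distrib, Finset.sum_sub_distrib,
      Finset.sum_ite_eq' Finset.univ j (fun m => μ m * ε),
      Finset.sum_ite_eq' Finset.univ i (fun m => μ m * ε),
      Finset.sum_ite_eq' Finset.univ p₀ (fun m => μ m * δ)]
    simp only [Finset.mem_univ, if_pos]
    simp only [hKdef, hνdef, hδdef, hDrval]
    ring
  have hdgsum : (∑ m : Fin n, ((d m : ℝ) - 2) * g m) = 0 := by
    simp only [hgdef, mul_sub, mul_add, mul_ite, mul_zero]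
    rw [Finset.sum_add_distrib, Finset.sum_sub_distrib,
      Finset.sum_ite_eq' Finset.univ j (fun m => ((d m : ℝ) - 2) * ε),
      Finset.sum_ite_eq' Finset.univ i (fun m => ((d m : ℝ) - 2) * ε),
      Finset.sum_ite_eq' Finset.univ p₀ (fun m => ((d m : ℝ) - 2) * δ)]
    simp only [Finset.mem_univ, if_pos]
    rw [hdp₀]
    simp only [hδdef, hDrval]
    push_cast
    ring
  -- feasibility of Y : remaining constraints
  have hYrow : ∀ m, ∑ p, Y m p = 1 := by
    intro m
    calc ∑ p, Y m p = ∑ p, (X m p + g m * e p) := rfl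
      _ = (∑ p, X m p) + ∑ p, g m * e p := Finset.sum_add_distrib
      _ = 1 + g m * ∑ p, e p := by rw [hrow m, ← Finset.mul_sum]
      _ = 1 := by rw [hesum]; ring
  have hYcol : ∀ p, (∑ m : Fin n, if (m : ℕ) < q then Y m p else 0) = 1 := by
    intro p
    have hpt : ∀ m : Fin n, (if (m : ℕ) < q then Y m p else 0)
        = (if (m : ℕ) < q then X m p else 0) + (if (m : ℕ) < q then g m else 0) * e p := by
      intro m
      by_cases h : (m : ℕ) < q
      · simp only [if_pos h, hYent]
      · simp [h]
    rw [Finset.sum_congr rfl (fun m _ => hpt m), Finset.sum_add_distrib, ← Finset.sum_mul]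
    rw [hcol p, hgsum_int]
    ring
  have hYdeg : ∀ P : Fin q, ∑ m, ((d m : ℝ) - 2) * Y m P = ∑ m, ((d m : ℝ) - 2) * X m P := by
    intro P
    have hpt : ∀ m : Fin n, ((d m : ℝ) - 2) * Y m P
        = ((d m : ℝ) - 2) * X m P + (((d m : ℝ) - 2) * g m) * e P := by
      intro m
      rw [hYent]
      ring
    rw [Finset.sum_congr rfl (fun m _ => hpt m), Finset.sum_add_distrib, ← Finset.sum_mul,
      hdgsum]
    ring
  have hYfeas : ROCPFeasible n q d Y :=
    ⟨hYbox, hYrow, hYcol,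
      fun P h1 h2 => by rw [hYdeg P]; exact hdegI P h1 h2,
      fun P h => by rw [hYdeg P]; exact hdegE P h⟩
  -- column weight of Y
  have hcY : ∀ p, (∑ m, μ m * Y m p) = (∑ m, μ m * X m p) + (K * ε) * e p := by
    intro p
    have hpt : ∀ m : Fin n, μ m * Y m p = μ m * X m p + (μ m * g m) * e p := by
      intro m
      rw [hYent]
      ring
    rw [Finset.sum_congr rfl (fun m _ => hpt m), Finset.sum_add_distrib, ← Finset.sum_mul,
      hμg]
  -- the objective difference
  have hWAB : |((A:ℕ):ℝ) - ((B:ℕ):ℝ)| = ((B:ℕ):ℝ) - ((A:ℕ):ℝ) := by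
    have h1 : ((A:ℕ):ℝ) ≤ ((B:ℕ):ℝ) := by exact_mod_cast hAB.le
    rw [abs_sub_comm]
    exact abs_of_nonneg (by linarith)
  have hsum_e : ∀ G : Fin q, (∑ p, e p * ((fun x => G) p : ℝ)) = 0 := fun _ => by
    rw [← Finset.sum_mul, hesum, zero_mul]
  have hS1 : (∑ k, e k * (∑ l, (∑ m, μ m * X m l) * |((k:ℕ):ℝ) - ((l:ℕ):ℝ)|))
      = (∑ l, (∑ m, μ m * X m l) * |((A:ℕ):ℝ) - ((l:ℕ):ℝ)|)
        - (∑ l, (∑ m, μ m * X m l) * |((B:ℕ):ℝ) - ((l:ℕ):ℝ)|) := by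
    simp only [hedef]
    exact sum_e A B (fun k => ∑ l, (∑ m, μ m * X m l) * |((k:ℕ):ℝ) - ((l:ℕ):ℝ)|)
  have hS2 : (∑ k, ∑ l, e l * ((∑ m, μ m * X m k) * |((k:ℕ):ℝ) - ((l:ℕ):ℝ)|))
      = (∑ l, (∑ m, μ m * X m l) * |((A:ℕ):ℝ) - ((l:ℕ):ℝ)|)
        - (∑ l, (∑ m, μ m * X m l) * |((B:ℕ):ℝ) - ((l:ℕ):ℝ)|) := by
    have h1 : ∀ k : Fin q, (∑ l, e l * ((∑ m, μ m * X m k) * |((k:ℕ):ℝ) - ((l:ℕ):ℝ)|))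
        = (∑ m, μ m * X m k) * |((k:ℕ):ℝ) - ((A:ℕ):ℝ)|
          - (∑ m, μ m * X m k) * |((k:ℕ):ℝ) - ((B:ℕ):ℝ)| := by
      intro k
      simp only [hedef]
      exact sum_e A B (fun l => (∑ m, μ m * X m k) * |((k:ℕ):ℝ) - ((l:ℕ):ℝ)|)
    rw [Finset.sum_congr rfl (fun k _ => h1 k), Finset.sum_sub_distrib]
    congr 1
    · refine Finset.sum_congr rfl (fun k _ => ?_)
      rw [abs_sub_comm]
    · refine Finset.sum_congr rfl (fun k _ => ?_)
      rw [abs_sub_comm]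
  have hS3 : (∑ k, ∑ l, e k * (e l * |((k:ℕ):ℝ) - ((l:ℕ):ℝ)|))
      = -2 * (((B:ℕ):ℝ) - ((A:ℕ):ℝ)) := by
    have h1 : ∀ k : Fin q, (∑ l, e l * |((k:ℕ):ℝ) - ((l:ℕ):ℝ)|)
        = |((k:ℕ):ℝ) - ((A:ℕ):ℝ)| - |((k:ℕ):ℝ) - ((B:ℕ):ℝ)| := by
      intro k
      simp only [hedef]
      exact sum_e A B (fun l => |((k:ℕ):ℝ) - ((l:ℕ):ℝ)|)
    have h2 : ∀ k : Fin q, (∑ l, e k * (e l * |((k:ℕ):ℝ) - ((l:ℕ):ℝ)|))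
        = e k * (|((k:ℕ):ℝ) - ((A:ℕ):ℝ)| - |((k:ℕ):ℝ) - ((B:ℕ):ℝ)|) := by
      intro k
      rw [← Finset.mul_sum, h1 k]
    rw [Finset.sum_congr rfl (fun k _ => h2 k)]
    have h3 : (∑ k, e k * (|((k:ℕ):ℝ) - ((A:ℕ):ℝ)| - |((k:ℕ):ℝ) - ((B:ℕ):ℝ)|))
        = (|((A:ℕ):ℝ) - ((A:ℕ):ℝ)| - |((A:ℕ):ℝ) - ((B:ℕ):ℝ)|)
          - (|((B:ℕ):ℝ) - ((A:ℕ):ℝ)| - |((B:ℕ):ℝ) - ((B:ℕ):ℝ)|) := by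
      simp only [hedef]
      exact sum_e A B (fun k => |((k:ℕ):ℝ) - ((A:ℕ):ℝ)| - |((k:ℕ):ℝ) - ((B:ℕ):ℝ)|)
    rw [h3, hWAB, abs_sub_comm ((B:ℕ):ℝ) ((A:ℕ):ℝ), hWAB]
    simp
    ring
  have hexp : fROCP μ Y - fROCP μ X
      = (K * ε) * ((∑ l, (∑ m, μ m * X m l) * |((A:ℕ):ℝ) - ((l:ℕ):ℝ)|)
          - (∑ l, (∑ m, μ m * X m l) * |((B:ℕ):ℝ) - ((l:ℕ):ℝ)|))
        - (K * ε)^2 * (((B:ℕ):ℝ) - ((A:ℕ):ℝ)) := by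
    rw [fROCP_eq μ Y, fROCP_eq μ X]
    simp only [hcY]
    have hterm : ∀ k l : Fin q,
        ((∑ m, μ m * X m k) + (K * ε) * e k) * ((∑ m, μ m * X m l) + (K * ε) * e l)
            * |((k:ℕ):ℝ) - ((l:ℕ):ℝ)|
        = (∑ m, μ m * X m k) * (∑ m, μ m * X m l) * |((k:ℕ):ℝ) - ((l:ℕ):ℝ)|
          + (K * ε) * (e k * ((∑ m, μ m * X m l) * |((k:ℕ):ℝ) - ((l:ℕ):ℝ)|))
          + (K * ε) * (e l * ((∑ m, μ m * X m k) * |((k:ℕ):ℝ) - ((l:ℕ):ℝ)|))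
          + (K * ε)^2 * (e k * (e l * |((k:ℕ):ℝ) - ((l:ℕ):ℝ)|)) := by
      intro k l
      ring
    rw [Finset.sum_congr rfl (fun k _ => Finset.sum_congr rfl (fun l _ => hterm k l))]
    have hpull : (∑ k : Fin q, ∑ l : Fin q,
        ((∑ m, μ m * X m k) * (∑ m, μ m * X m l) * |((k:ℕ):ℝ) - ((l:ℕ):ℝ)|
          + (K * ε) * (e k * ((∑ m, μ m * X m l) * |((k:ℕ):ℝ) - ((l:ℕ):ℝ)|))
          + (K * ε) * (e l * ((∑ m, μ m * X m k) * |((k:ℕ):ℝ) - ((l:ℕ):ℝ)|))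
          + (K * ε)^2 * (e k * (e l * |((k:ℕ):ℝ) - ((l:ℕ):ℝ)|))))
        = (∑ k, ∑ l, (∑ m, μ m * X m k) * (∑ m, μ m * X m l) * |((k:ℕ):ℝ) - ((l:ℕ):ℝ)|)
          + (K * ε) * (∑ k, ∑ l, e k * ((∑ m, μ m * X m l) * |((k:ℕ):ℝ) - ((l:ℕ):ℝ)|))
          + (K * ε) * (∑ k, ∑ l, e l * ((∑ m, μ m * X m k) * |((k:ℕ):ℝ) - ((l:ℕ):ℝ)|))
          + (K * ε)^2 * (∑ k, ∑ l, e k * (e l * |((k:ℕ):ℝ) - ((l:ℕ):ℝ)|)) := by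
      simp only [Finset.sum_add_distrib, ← Finset.mul_sum]
    rw [hpull]
    have hS1' : (∑ k, ∑ l, e k * ((∑ m, μ m * X m l) * |((k:ℕ):ℝ) - ((l:ℕ):ℝ)|))
        = (∑ l, (∑ m, μ m * X m l) * |((A:ℕ):ℝ) - ((l:ℕ):ℝ)|)
          - (∑ l, (∑ m, μ m * X m l) * |((B:ℕ):ℝ) - ((l:ℕ):ℝ)|) := by
      have h4 : ∀ k : Fin q, (∑ l, e k * ((∑ m, μ m * X m l) * |((k:ℕ):ℝ) - ((l:ℕ):ℝ)|))
          = e k * (∑ l, (∑ m, μ m * X m l) * |((k:ℕ):ℝ) - ((l:ℕ):ℝ)|) := by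
        intro k
        rw [← Finset.mul_sum]
      rw [Finset.sum_congr rfl (fun k _ => h4 k)]
      exact hS1
    rw [hS1', hS2, hS3]
    ring
  -- conclusion
  have hkey := key_ineq (fun p => ∑ m, μ m * X m p)
    (fun l => Finset.sum_nonneg (fun m _ => mul_nonneg (hμ m) (hbox m l).1))
    (fun l => Finset.sum_congr rfl (fun m _ => by rw [hsym m l]))
    A B hAB hB2
  have hba : (0:ℝ) < ((B:ℕ):ℝ) - ((A:ℕ):ℝ) := by
    have h1 : ((A:ℕ):ℝ) < ((B:ℕ):ℝ) := by exact_mod_cast hAB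
    linarith
  have ht0 : 0 < K * ε := mul_pos hK hε
  have htcB : K * ε < cB := by
    have h1 : K * ε ≤ K * (cB / (2*K)) := mul_le_mul_of_nonneg_left hεcB (le_of_lt hK)
    have h2 : K * (cB / (2*K)) = cB/2 := by
      field_simp
    rw [h2] at h1
    have h3 : cB / 2 < cB := by linarith [hcB]
    exact lt_of_le_of_lt h1 h3
  have hcBrw : (∑ m, μ m * X m B) = cB := hcBdef.symm
  rw [hcBrw] at hkey
  have h1 : (((B:ℕ):ℝ) - ((A:ℕ):ℝ)) * cB
      ≤ (∑ l, (∑ m, μ m * X m l) * |((A:ℕ):ℝ) - ((l:ℕ):ℝ)|)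
        - (∑ l, (∑ m, μ m * X m l) * |((B:ℕ):ℝ) - ((l:ℕ):ℝ)|) := by
    linarith [hkey]
  have h2 : (K * ε) * ((((B:ℕ):ℝ) - ((A:ℕ):ℝ)) * cB)
      ≤ (K * ε) * ((∑ l, (∑ m, μ m * X m l) * |((A:ℕ):ℝ) - ((l:ℕ):ℝ)|)
        - (∑ l, (∑ m, μ m * X m l) * |((B:ℕ):ℝ) - ((l:ℕ):ℝ)|)) :=
    mul_le_mul_of_nonneg_left h1 (le_of_lt ht0)
  have h3 : 0 < (K * ε) * (((B:ℕ):ℝ) - ((A:ℕ):ℝ)) * (cB - K * ε) :=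
    mul_pos (mul_pos ht0 hba) (by linarith)
  have h4 : (K * ε) * ((((B:ℕ):ℝ) - ((A:ℕ):ℝ)) * cB) - (K * ε)^2 * (((B:ℕ):ℝ) - ((A:ℕ):ℝ))
      = (K * ε) * (((B:ℕ):ℝ) - ((A:ℕ):ℝ)) * (cB - K * ε) := by
    ring
  have hYle := hopt Y hYfeas
  linarith

set_option maxHeartbeats 1600000 in
theorem internal_exclusion_in_optimal_symmetric_solution (n q : ℕ) (hnq : q ≤ n) (hq : 4 ≤ q)
    (d : Fin n → ℕ) (μ : Fin n → ℝ)
    (hμ : ∀ i, 0 ≤ μ i)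
    (hμ_inj : Function.Injective μ)
    (hμ_mono : ∀ i j : Fin n, 2 ≤ d i → 2 ≤ d j → i < j → μ j ≤ μ i)
    (hd_anti : ∀ i j : Fin n, i ≤ j → d j ≤ d i)
    (hd_sum : ∑ i, d i = 2 * (n - 1))
    (hd_int : ∀ i : Fin n, (i : ℕ) < q → 1 < d i)
    (hd_pend : ∀ i : Fin n, q ≤ (i : ℕ) → d i = 1)
    (X : Matrix (Fin n) (Fin q) ℝ)
    (hfeas : ROCPFeasible n q d X)
    (hopt : ∀ Y, ROCPFeasible n q d Y → fROCP μ Y ≤ fROCP μ X)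
    (hsym : SymmetricSol X)
    (i : Fin n) (hi : (i : ℕ) < q)
    (k : ℕ) (hk1 : 1 ≤ k) (hkc : k ≤ (q + 1) / 2)
    (hxi : 0 < X i ⟨k - 1, by omega⟩) :
    ∀ (j : Fin n), j ≤ i → ∀ (l : ℕ) (hl1 : k + 1 ≤ l) (hl2 : l ≤ (q + 1) / 2),
      X j ⟨l - 1, by omega⟩ = 0 := by
  intro j hj l hl1 hl2
  by_contra hcon
  obtain ⟨hbox, hrow, hcol, hdegI, hdegE⟩ := hfeas
  have hfeas' : ROCPFeasible n q d X := ⟨hbox, hrow, hcol, hdegI, hdegE⟩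
  set A : Fin q := ⟨k - 1, by omega⟩ with hAdef
  set B : Fin q := ⟨l - 1, by omega⟩ with hBdef
  have hAval : (A : ℕ) = k - 1 := rfl
  have hBval : (B : ℕ) = l - 1 := rfl
  have hxjB : 0 < X j B := lt_of_le_of_ne (hbox j B).1 (Ne.symm hcon)
  have hAB : (A : ℕ) < (B : ℕ) := by rw [hAval, hBval]; omega
  have hB2 : 2 * (B : ℕ) < q := by rw [hBval]; omega
  have hxiA : 0 < X i A := hxi
  rcases lt_or_eq_of_le hj with hlt | heq
  · exact absurd (lemA hq hnq d μ hμ hμ_inj hμ_mono hd_anti hd_sum hd_int hd_pend X hfeas'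
      hopt hsym i j hi hlt A B hAB hB2 hxiA hxjB) (fun h => h)
  · -- j = i
    rw [heq] at hxjB
    -- the counting argument
    have hxiB : 0 < X i B := hxjB
    set S : Finset (Fin q) := Finset.univ.filter (fun p : Fin q => (p : ℕ) ≤ k - 1) with hSdef
    set S' : Finset (Fin q) := Finset.univ.filter (fun p : Fin q => q ≤ (p : ℕ) + k) with hS'def
    have hvr : ∀ p : Fin q, ((p.rev : Fin q) : ℕ) = q - 1 - (p : ℕ) := by
      intro p; rw [Fin.val_rev]; omega
    -- rows above i vanish left of B
    have hzero_above : ∀ m : Fin n, i < m → (m : ℕ) < q → ∀ P : Fin q,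
        (P : ℕ) < l - 1 → X m P = 0 := by
      intro m him hmq P hP
      by_contra h
      have hpos : 0 < X m P := lt_of_le_of_ne (hbox m P).1 (Ne.symm h)
      exact lemA hq hnq d μ hμ hμ_inj hμ_mono hd_anti hd_sum hd_int hd_pend X hfeas'
        hopt hsym m i hmq him P B (by rw [hBval]; omega) hB2 hpos hxiB
    -- rows below i vanish in the middle region
    have hmid : ∀ m : Fin n, m < i → ∀ P : Fin q,
        k - 1 < (P : ℕ) → (P : ℕ) + k < q → X m P = 0 := by
      intro m hmi P h1 h2
      by_cases hc : 2 * (P : ℕ) < q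
      · by_contra h
        have hpos : 0 < X m P := lt_of_le_of_ne (hbox m P).1 (Ne.symm h)
        exact lemA hq hnq d μ hμ hμ_inj hμ_mono hd_anti hd_sum hd_int hd_pend X hfeas'
          hopt hsym i m hi hmi A P (by rw [hAval]; omega) hc hxiA hpos
      · have h1' : k - 1 < ((P.rev : Fin q) : ℕ) := by rw [hvr P]; omega
        have h2' : 2 * ((P.rev : Fin q) : ℕ) < q := by rw [hvr P]; omega
        have hz : X m P.rev = 0 := by
          by_contra h
          have hpos : 0 < X m P.rev := lt_of_le_of_ne (hbox m P.rev).1 (Ne.symm h)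
          exact lemA hq hnq d μ hμ hμ_inj hμ_mono hd_anti hd_sum hd_int hd_pend X hfeas'
            hopt hsym i m hi hmi A P.rev (by rw [hAval]; omega) h2' hxiA hpos
        rw [hsym m P, hz]
    -- reflection bijection between S' and S
    have hSS' : ∀ r : Fin n, (∑ p ∈ S', X r p) = ∑ p ∈ S, X r p := by
      intro r
      refine Finset.sum_nbij' (fun p => p.rev) (fun p => p.rev) ?_ ?_ ?_ ?_ ?_
      · intro p hp
        have hp' : q ≤ (p : ℕ) + k := by simpa [hS'def] using hp
        simp only [hSdef, Finset.mem_filter, Finset.mem_univ, true_and]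
        rw [hvr p]; omega
      · intro p hp
        have hp' : (p : ℕ) ≤ k - 1 := by simpa [hSdef] using hp
        simp only [hS'def, Finset.mem_filter, Finset.mem_univ, true_and]
        have := p.isLt
        rw [hvr p]; omega
      · intro p _; exact Fin.rev_rev p
      · intro p _; exact Fin.rev_rev p
      · intro p _; exact hsym r p
    have hdisj : Disjoint S S' := by
      rw [Finset.disjoint_left]
      intro p hp hp'
      have h1 : (p : ℕ) ≤ k - 1 := by simpa [hSdef] using hp
      have h2 : q ≤ (p : ℕ) + k := by simpa [hS'def] using hp'
      omega
    -- rows below i have mass exactly 1/2 in S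
    have hrow_half : ∀ m : Fin n, m < i → (∑ p ∈ S, X m p) = 1/2 := by
      intro m hmi
      have houts : ∀ P : Fin q, P ∈ Finset.univ → P ∉ S ∪ S' → X m P = 0 := by
        intro P _ hP
        rw [Finset.mem_union] at hP
        push_neg at hP
        obtain ⟨hP1, hP2⟩ := hP
        have h1 : ¬ (P : ℕ) ≤ k - 1 := by
          intro h; exact hP1 (by simp [hSdef, h])
        have h2 : ¬ q ≤ (P : ℕ) + k := by
          intro h; exact hP2 (by simp [hS'def, h])
        exact hmid m hmi P (by omega) (by omega)
      have hsplit : (∑ p ∈ S ∪ S', X m p) = 1 := by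
        rw [Finset.sum_subset (Finset.subset_univ _) houts, hrow m]
      rw [Finset.sum_union hdisj, hSS' m] at hsplit
      linarith
    -- mass of row i in S
    have hAmem : A ∈ S := by simp [hSdef, hAval]
    have hs'pos : 0 < ∑ p ∈ S, X i p :=
      lt_of_lt_of_le hxiA (Finset.single_le_sum (fun p _ => (hbox i p).1) hAmem)
    have hBnotS : B ∉ S := by
      simp only [hSdef, Finset.mem_filter, Finset.mem_univ, true_and, hBval]
      omega
    have hBnotS' : B ∉ S' := by
      simp only [hS'def, Finset.mem_filter, Finset.mem_univ, true_and, hBval]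
      omega
    have hs'half : 2 * (∑ p ∈ S, X i p) + X i B ≤ 1 := by
      have hsub : insert B (S ∪ S') ⊆ Finset.univ := Finset.subset_univ _
      have hle : (∑ p ∈ insert B (S ∪ S'), X i p) ≤ ∑ p, X i p :=
        Finset.sum_le_sum_of_subset_of_nonneg hsub (fun p _ _ => (hbox i p).1)
      rw [hrow i, Finset.sum_insert (by simp [Finset.mem_union, hBnotS, hBnotS']),
        Finset.sum_union hdisj, hSS' i] at hle
      linarith
    -- column counting over S
    have hScard : S.card = k := by
      have hpred : S = Finset.univ.filter (fun p : Fin q => (p : ℕ) < k) := by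
        refine Finset.filter_congr (fun p _ => ?_)
        constructor
        · intro h; omega
        · intro h; omega
      rw [hpred]
      exact card_val_lt k (by omega)
    have hcount : ((k : ℕ) : ℝ) = ∑ m : Fin n, (if (m : ℕ) < q then ∑ p ∈ S, X m p else 0) := by
      have h1 : ((k : ℕ) : ℝ) = ∑ p ∈ S, (1 : ℝ) := by
        rw [Finset.sum_const, hScard, nsmul_eq_mul, mul_one]
      rw [h1, Finset.sum_congr rfl (fun p (_ : p ∈ S) => (hcol p).symm), Finset.sum_comm]
      refine Finset.sum_congr rfl (fun m _ => ?_)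
      by_cases h : (m : ℕ) < q
      · simp [h]
      · simp [h]
    have hFval : ∀ m : Fin n, (if (m : ℕ) < q then ∑ p ∈ S, X m p else 0)
        = (if m < i then (1/2 : ℝ) else 0) + (if m = i then ∑ p ∈ S, X i p else 0) := by
      intro m
      by_cases h1 : m < i
      · have hmq : (m : ℕ) < q := lt_trans h1 hi
        rw [if_pos hmq, if_pos h1, if_neg (ne_of_lt h1), hrow_half m h1]
        ring
      · by_cases h2 : m = i
        · rw [h2, if_pos hi, if_neg (lt_irrefl i), if_pos rfl]
          ring
        · have him : i < m := lt_of_le_of_ne (not_lt.1 h1) (Ne.symm h2)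
          by_cases h3 : (m : ℕ) < q
          · rw [if_pos h3, if_neg h1, if_neg h2]
            have hz : (∑ p ∈ S, X m p) = 0 := by
              refine Finset.sum_eq_zero (fun p hp => ?_)
              have hp' : (p : ℕ) ≤ k - 1 := by simpa [hSdef] using hp
              exact hzero_above m him h3 p (by omega)
            rw [hz]; ring
          · rw [if_neg h3, if_neg h1, if_neg h2]; ring
    have hcount2 : ((k : ℕ) : ℝ) = ((i : ℕ) : ℝ) * (1/2) + ∑ p ∈ S, X i p := by
      rw [hcount, Finset.sum_congr rfl (fun m _ => hFval m), Finset.sum_add_distrib]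
      congr 1
      · rw [← Finset.sum_filter, Finset.sum_const]
        have hpred : Finset.univ.filter (fun m : Fin n => m < i)
            = Finset.univ.filter (fun m : Fin n => (m : ℕ) < (i : ℕ)) := by
          refine Finset.filter_congr (fun m _ => ?_)
          exact Fin.lt_def
        rw [hpred, card_val_lt (i : ℕ) (le_of_lt i.isLt), nsmul_eq_mul]
      · rw [Finset.sum_ite_eq' Finset.univ i (fun _ => ∑ p ∈ S, X i p)]
        simp
    -- final contradiction
    have hc1 : ((i : ℕ) : ℝ) < 2 * ((k : ℕ) : ℝ) := by linarith [hs'pos]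
    have hc2 : 2 * ((k : ℕ) : ℝ) < ((i : ℕ) : ℝ) + 1 := by linarith [hxiB, hs'half]
    have hn1 : (i : ℕ) < 2 * k := by exact_mod_cast hc1
    have hn2 : 2 * k < (i : ℕ) + 1 := by exact_mod_cast hc2
    omega
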